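/- For any nonnegative integers m and n with n > 0, the normalized associated Legendre function P̄^m_{m+2n} has exactly n zeros in the open interval (0,1); that is, there exist exactly n real numbers 0 < x_0 < x_1 < ... < x_{n-1} < 1 with P̄^m_{m+2n}(x_j) = 0. -/

import Mathlib

open scoped Nat

/-- The Legendre polynomial of degree `l`, via Rodrigues' formula. -/
noncomputable def legendreP (l : ℕ) : ℝ → ℝ := fun x =>
  (1 / (2 ^ l * (l ! : ℝ))) * iteratedDeriv l (fun y : ℝ => (y ^ 2 - 1) ^ l) x

/-- The normalized associated Legendre function `P̄_l^m`. -/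
noncomputable def nalf (m l : ℕ) : ℝ → ℝ := fun x =>
  Real.sqrt ((2 * l + 1) / 2 * ((l - m)! : ℝ) / ((l + m)! : ℝ)) *
    (1 - x ^ 2) ^ ((m : ℝ) / 2) * iteratedDeriv m (legendreP l) x

/-- The spectral (l²-operator) norm of a real matrix. -/
noncomputable def specNorm {α β : Type*} [Fintype α] [Fintype β] [DecidableEq α] [DecidableEq β]
    (A : Matrix α β ℝ) : ℝ :=
  ‖LinearMap.toContinuousLinearMap (Matrix.toEuclideanLin A)‖

/-- The singular values of a real matrix, listed in decreasing order. -/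
noncomputable def singularValues {p q : ℕ} (A : Matrix (Fin p) (Fin q) ℝ) : List ℝ :=
  List.insertionSort (· ≥ ·)
    (List.ofFn fun i => Real.sqrt (((by simpa [Matrix.conjTranspose_eq_transpose_of_trivial] using
      Matrix.isHermitian_conjTranspose_mul_self A : (Matrix.transpose A * A).IsHermitian)).eigenvalues i))

noncomputable def ccoef (m l : ℕ) : ℝ :=
  Real.sqrt ((((l : ℝ) - m + 1) * ((l : ℝ) - m + 2) * ((l : ℝ) + m + 1) * ((l : ℝ) + m + 2)) /
    ((2 * (l : ℝ) + 1) * (2 * (l : ℝ) + 3) ^ 2 * (2 * (l : ℝ) + 5)))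

noncomputable def dcoef (m l : ℕ) : ℝ :=
  (2 * (l : ℝ) * ((l : ℝ) + 1) - 2 * (m : ℝ) ^ 2 - 1) /
    ((2 * (l : ℝ) - 1) * (2 * (l : ℝ) + 3))


open Polynomial

private lemma polyIteratedDeriv (p : ℝ[X]) (k : ℕ) :
    iteratedDeriv k (fun x => p.eval x) = fun x => (derivative^[k] p).eval x := by
  induction k with
  | zero => simp
  | succ k ih =>
    rw [iteratedDeriv_succ, ih, Function.iterate_succ_apply']
    funext x
    exact Polynomial.deriv (p := derivative^[k] p) (x := x)

private lemma natDegIter {p : ℝ[X]} {k : ℕ} (hk : k ≤ p.natDegree) (hp : p ≠ 0) :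
    (derivative^[k] p).natDegree = p.natDegree - k ∧ derivative^[k] p ≠ 0 := by
  induction k with
  | zero => simpa
  | succ k ih =>
    obtain ⟨h1, h2⟩ := ih (by omega)
    have hpos : 0 < (derivative^[k] p).natDegree := by omega
    have hdeg := Polynomial.degree_derivative_eq _ hpos
    rw [Function.iterate_succ_apply']
    constructor
    · have := Polynomial.natDegree_eq_of_degree_eq_some hdeg
      omega
    · intro h0
      rw [h0] at hdeg
      simp at hdeg

private lemma rolleFinset (p : ℝ[X]) (N : ℕ) :
    ∀ t : Finset ℝ, t.card = N → (∀ x ∈ t, p.eval x = 0) →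
    ∃ u : Finset ℝ, u.card = N - 1 ∧ (∀ y ∈ u, (derivative p).eval y = 0) ∧
      ∀ y ∈ u, ∃ a ∈ t, ∃ b ∈ t, a < y ∧ y < b := by
  induction N with
  | zero => intro t _ _; exact ⟨∅, by simp, by simp, by simp⟩
  | succ N ih =>
    intro t hcard hz
    rcases Nat.eq_zero_or_pos N with h0 | hNpos
    · exact ⟨∅, by simp [h0], by simp, by simp⟩
    · have hne : t.Nonempty := Finset.card_pos.mp (by omega)
      set M := t.max' hne with hM
      have hMt : M ∈ t := t.max'_mem hne
      set t' := t.erase M with ht'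
      have hct' : t'.card = N := by rw [ht', Finset.card_erase_of_mem hMt, hcard]; omega
      have hne' : t'.Nonempty := Finset.card_pos.mp (by omega)
      set M' := t'.max' hne' with hM'
      have hM't' : M' ∈ t' := t'.max'_mem hne'
      have hM't : M' ∈ t := Finset.mem_of_mem_erase hM't'
      have hlt : M' < M := lt_of_le_of_ne (t.le_max' _ hM't) (Finset.ne_of_mem_erase hM't')
      obtain ⟨u', hu1, hu2, hu3⟩ := ih t' hct' (fun x hx => hz x (Finset.mem_of_mem_erase hx))
      obtain ⟨c, hc, hc0⟩ := exists_deriv_eq_zero hlt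
        ((p.continuous).continuousOn : ContinuousOn (fun x => p.eval x) _)
        (by rw [hz M' hM't, hz M hMt])
      have hcz : (derivative p).eval c = 0 := by
        rwa [Polynomial.deriv (p := p) (x := c)] at hc0
      have hcu' : c ∉ u' := by
        intro hmem
        obtain ⟨a, _, b, hb, _, hyb⟩ := hu3 c hmem
        have : b ≤ M' := t'.le_max' _ hb
        have : c < M' := lt_of_lt_of_le hyb this
        exact absurd hc.1 (by linarith)
      refine ⟨insert c u', ?_, ?_, ?_⟩
      · rw [Finset.card_insert_of_notMem hcu', hu1]; omega
      · intro y hy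
        rcases Finset.mem_insert.mp hy with rfl | hy'
        · exact hcz
        · exact hu2 y hy'
      · intro y hy
        rcases Finset.mem_insert.mp hy with rfl | hy'
        · exact ⟨M', hM't, M, hMt, hc.1, hc.2⟩
        · obtain ⟨a, ha, b, hb, h1, h2⟩ := hu3 y hy'
          exact ⟨a, Finset.mem_of_mem_erase ha, b, Finset.mem_of_mem_erase hb, h1, h2⟩

private lemma bndDvd (l : ℕ) : ∀ j ≤ l, ∃ g : ℝ[X],
    derivative^[j] ((X ^ 2 - 1 : ℝ[X]) ^ l) = (X ^ 2 - 1) ^ (l - j) * g := by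
  intro j
  induction j with
  | zero => intro _; exact ⟨1, by simp⟩
  | succ j ih =>
    intro hj
    obtain ⟨g, hg⟩ := ih (by omega)
    have he : l - j = (l - (j + 1)) + 1 := by omega
    refine ⟨C (((l - (j + 1) : ℕ) + 1 : ℕ) : ℝ) * derivative (X ^ 2 - 1) * g
      + (X ^ 2 - 1) * derivative g, ?_⟩
    rw [Function.iterate_succ_apply', hg, he, derivative_mul, derivative_pow]
    simp only [Nat.add_sub_cancel]
    ring

private lemma compNegIter (k : ℕ) (p : ℝ[X]) :
    derivative^[k] (p.comp (-X)) = C ((-1 : ℝ) ^ k) * (derivative^[k] p).comp (-X) := by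
  induction k with
  | zero => simp
  | succ k ih =>
    rw [Function.iterate_succ_apply', ih, derivative_C_mul, derivative_comp]
    rw [Function.iterate_succ_apply']
    simp [pow_succ]

private lemma bndZero (l j : ℕ) (hj : j < l) (y : ℝ) (hy : y = 1 ∨ y = -1) :
    (derivative^[j] ((X ^ 2 - 1 : ℝ[X]) ^ l)).eval y = 0 := by
  obtain ⟨g, hg⟩ := bndDvd l j (by omega)
  have hy2 : y ^ 2 - 1 = 0 := by rcases hy with rfl | rfl <;> norm_num
  rw [hg, eval_mul, eval_pow]
  simp only [eval_sub, eval_pow, eval_one, eval_X, hy2]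
  rw [zero_pow (by omega), zero_mul]


private lemma phase1 (l : ℕ) : ∀ j ≤ l, ∃ s : Finset ℝ,
    s.card = j ∧ (∀ x ∈ s, x ∈ Set.Ioo (-1 : ℝ) 1) ∧
    ∀ x ∈ s, (derivative^[j] ((X ^ 2 - 1 : ℝ[X]) ^ l)).eval x = 0 := by
  intro j
  induction j with
  | zero => intro _; exact ⟨∅, by simp, by simp, by simp⟩
  | succ j ih =>
    intro hj
    obtain ⟨s, hc, hio, hzero⟩ := ih (by omega)
    have h1s : (1 : ℝ) ∉ s := fun h => absurd (hio 1 h).2 (lt_irrefl 1)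
    have hm1s : (-1 : ℝ) ∉ s := fun h => absurd (hio _ h).1 (lt_irrefl (-1))
    set t := insert (-1 : ℝ) (insert (1 : ℝ) s) with ht
    have htc : t.card = j + 2 := by
      rw [ht, Finset.card_insert_of_notMem (by simp [h1s, hm1s]; norm_num),
        Finset.card_insert_of_notMem h1s, hc]
    have htz : ∀ x ∈ t, (derivative^[j] ((X ^ 2 - 1 : ℝ[X]) ^ l)).eval x = 0 := by
      intro x hx
      rcases Finset.mem_insert.mp hx with rfl | hx
      · exact bndZero l j (by omega) _ (Or.inr rfl)
      rcases Finset.mem_insert.mp hx with rfl | hx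
      · exact bndZero l j (by omega) _ (Or.inl rfl)
      · exact hzero x hx
    obtain ⟨u, hu1, hu2, hu3⟩ := rolleFinset _ (j + 2) t htc htz
    refine ⟨u, by omega, ?_, ?_⟩
    · intro y hy
      obtain ⟨a, ha, b, hb, h1, h2⟩ := hu3 y hy
      have hIcc : ∀ z ∈ t, z ∈ Set.Icc (-1 : ℝ) 1 := by
        intro z hz
        rcases Finset.mem_insert.mp hz with rfl | hz
        · exact ⟨le_refl _, by norm_num⟩
        rcases Finset.mem_insert.mp hz with rfl | hz
        · exact ⟨by norm_num, le_refl _⟩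
        · exact ⟨(hio z hz).1.le, (hio z hz).2.le⟩
      exact ⟨lt_of_le_of_lt (hIcc a ha).1 h1, lt_of_lt_of_le h2 (hIcc b hb).2⟩
    · intro y hy
      have := hu2 y hy
      rwa [Function.iterate_succ_apply']


private lemma phase2 (l mm : ℕ) (hml : mm < l) : ∀ i ≤ mm, ∃ s : Finset ℝ,
    s.card = l - i ∧ (∀ x ∈ s, x ∈ Set.Ioo (-1 : ℝ) 1) ∧
    ∀ x ∈ s, (derivative^[l + i] ((X ^ 2 - 1 : ℝ[X]) ^ l)).eval x = 0 := by
  intro i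
  induction i with
  | zero =>
    intro _
    simpa using phase1 l l (le_refl l)
  | succ i ih =>
    intro hi
    obtain ⟨s, hc, hio, hzero⟩ := ih (by omega)
    obtain ⟨u, hu1, hu2, hu3⟩ := rolleFinset _ (l - i) s hc hzero
    refine ⟨u, by omega, ?_, ?_⟩
    · intro y hy
      obtain ⟨a, ha, b, hb, h1, h2⟩ := hu3 y hy
      exact ⟨lt_trans (hio a ha).1 h1, lt_trans h2 (hio b hb).2⟩
    · intro y hy
      have := hu2 y hy
      rwa [show l + (i + 1) = (l + i) + 1 from rfl, Function.iterate_succ_apply']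

theorem zeros_of_nalf_even (m n : ℕ) (hn : 0 < n) :
    ∃ x : Fin n → ℝ, StrictMono x ∧
      (∀ j, x j ∈ Set.Ioo (0 : ℝ) 1 ∧ nalf m (m + 2 * n) (x j) = 0) ∧
      (∀ y ∈ Set.Ioo (0 : ℝ) 1, nalf m (m + 2 * n) y = 0 → ∃ j, y = x j) := by
  set l : ℕ := m + 2 * n with hl
  set F : ℝ[X] := (X ^ 2 - 1 : ℝ[X]) ^ l with hF
  set q : ℝ[X] := derivative^[l + m] F with hq
  -- degree facts
  have hXdeg : (X ^ 2 - 1 : ℝ[X]).natDegree = 2 := by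
    rw [← Polynomial.C_1]; exact Polynomial.natDegree_X_pow_sub_C
  have hFdeg : F.natDegree = 2 * l := by
    rw [hF, Polynomial.natDegree_pow, hXdeg]; ring
  have hFne : F ≠ 0 := by
    intro h
    rw [h, Polynomial.natDegree_zero] at hFdeg
    omega
  have hqd := natDegIter (p := F) (k := l + m) (by omega) hFne
  have hqdeg : q.natDegree = 2 * n := by rw [hq, hqd.1]; omega
  have hqne : q ≠ 0 := hqd.2
  -- the 2n interior zeros
  obtain ⟨s, hsc, hsio, hsz⟩ := phase2 l m (by omega) m le_rfl
  have hsc' : s.card = 2 * n := by omega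
  -- s is exactly the root set of q
  have hsub : s ⊆ q.roots.toFinset := by
    intro z hz
    rw [Multiset.mem_toFinset, Polynomial.mem_roots hqne]
    exact hsz z hz
  have hseq : s = q.roots.toFinset := by
    apply Finset.eq_of_subset_of_card_le hsub
    calc q.roots.toFinset.card ≤ Multiset.card q.roots := q.roots.toFinset_card_le
      _ ≤ q.natDegree := q.card_roots'
      _ = s.card := by omega
  have hroot : ∀ y : ℝ, q.eval y = 0 → y ∈ s := by
    intro y hy
    rw [hseq, Multiset.mem_toFinset, Polynomial.mem_roots hqne]
    exact hy
  -- evenness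
  have hFcomp : F.comp (-X) = F := by
    rw [hF]
    simp [Polynomial.pow_comp, Polynomial.sub_comp, Polynomial.one_comp, neg_sq]
  have hqcomp : q.comp (-X) = q := by
    have h1 := compNegIter (l + m) F
    rw [hFcomp] at h1
    have hev : ((-1 : ℝ)) ^ (l + m) = 1 := Even.neg_one_pow (by exact ⟨m + n, by omega⟩)
    rw [hev, Polynomial.C_1, one_mul] at h1
    exact h1.symm
  have heven : ∀ y : ℝ, q.eval (-y) = q.eval y := by
    intro y
    conv_rhs => rw [← hqcomp]
    rw [Polynomial.eval_comp]
    simp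
  -- negation closure of s
  have hnegmem : ∀ z ∈ s, -z ∈ s := by
    intro z hz
    apply hroot
    rw [heven]
    exact hsz z hz
  -- counting positives
  set T : Finset ℝ := s.filter (fun x => 0 < x) with hT
  set Tn : Finset ℝ := s.filter (fun x => x < 0) with hTn
  have himg : Tn = T.image (fun x => -x) := by
    ext z
    simp only [hT, hTn, Finset.mem_image, Finset.mem_filter]
    constructor
    · rintro ⟨hzs, hz0⟩
      exact ⟨-z, ⟨hnegmem z hzs, by linarith⟩, by ring⟩
    · rintro ⟨a, ⟨has, ha0⟩, rfl⟩
      exact ⟨hnegmem a has, by linarith⟩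
  have hcardTn : Tn.card = T.card := by
    rw [himg, Finset.card_image_of_injective _ neg_injective]
  have hsplit : T.card + (s.filter (fun x => ¬ 0 < x)).card = s.card :=
    Finset.card_filter_add_card_filter_not (fun x => 0 < x)
  have h0s : (0 : ℝ) ∉ s := by
    intro h0
    have hfneg : s.filter (fun x => ¬ 0 < x) = insert (0 : ℝ) Tn := by
      ext z
      simp only [hTn, Finset.mem_insert, Finset.mem_filter, not_lt]
      constructor
      · rintro ⟨hzs, hz0⟩
        rcases lt_or_eq_of_le hz0 with h | h
        · exact Or.inr ⟨hzs, h⟩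
        · exact Or.inl h
      · rintro (rfl | ⟨hzs, hz0⟩)
        · exact ⟨h0, le_refl 0⟩
        · exact ⟨hzs, hz0.le⟩
    rw [hfneg, Finset.card_insert_of_notMem (by simp [hTn])] at hsplit
    omega
  have hfneg' : s.filter (fun x => ¬ 0 < x) = Tn := by
    ext z
    simp only [hTn, Finset.mem_filter, not_lt]
    constructor
    · rintro ⟨hzs, hz0⟩
      refine ⟨hzs, lt_of_le_of_ne hz0 ?_⟩
      rintro rfl
      exact h0s hzs
    · rintro ⟨hzs, hz0⟩
      exact ⟨hzs, hz0.le⟩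
  rw [hfneg'] at hsplit
  have hTcard : T.card = n := by omega
  -- the enumeration
  have hTsub : ∀ z ∈ T, z ∈ Set.Ioo (0 : ℝ) 1 := by
    intro z hz
    rw [hT, Finset.mem_filter] at hz
    exact ⟨hz.2, (hsio z hz.1).2⟩
  -- bridge between nalf and q
  have hP : legendreP l = fun x => ((C (1 / (2 ^ l * (l ! : ℝ))) * derivative^[l] F)).eval x := by
    funext x
    show (1 / (2 ^ l * (l ! : ℝ))) * iteratedDeriv l (fun y : ℝ => (y ^ 2 - 1) ^ l) x = _
    have hfun : (fun y : ℝ => (y ^ 2 - 1) ^ l) = fun y => F.eval y := by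
      funext y; rw [hF]; simp
    rw [hfun, polyIteratedDeriv]
    simp [Polynomial.eval_mul]
  have hD : iteratedDeriv m (legendreP l) = fun x => (1 / (2 ^ l * (l ! : ℝ))) * q.eval x := by
    rw [hP, polyIteratedDeriv]
    funext x
    rw [Polynomial.iterate_derivative_C_mul, ← Function.iterate_add_apply, Nat.add_comm m l, hq]
    simp [Polynomial.eval_mul]
  have hApos : (0 : ℝ) < (2 * (l : ℝ) + 1) / 2 * ((l - m)! : ℝ) / ((l + m)! : ℝ) := by
    have h1 : (0 : ℝ) < ((l - m)! : ℝ) := by exact_mod_cast (l - m).factorial_pos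
    have h2 : (0 : ℝ) < ((l + m)! : ℝ) := by exact_mod_cast (l + m).factorial_pos
    positivity
  have hnalf : ∀ y ∈ Set.Ioo (0 : ℝ) 1, (nalf m l y = 0 ↔ q.eval y = 0) := by
    intro y hy
    have hy2 : (0 : ℝ) < 1 - y ^ 2 := by nlinarith [hy.1, hy.2]
    have hrp : (0 : ℝ) < (1 - y ^ 2) ^ ((m : ℝ) / 2) := Real.rpow_pos_of_pos hy2 _
    have hsq : (0 : ℝ) < Real.sqrt ((2 * l + 1) / 2 * ((l - m)! : ℝ) / ((l + m)! : ℝ)) :=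
      Real.sqrt_pos.mpr hApos
    have hcpos : (0 : ℝ) < 1 / (2 ^ l * (l ! : ℝ)) := by positivity
    simp only [nalf, hD]
    constructor
    · intro h
      have h' : (Real.sqrt ((2 * l + 1) / 2 * ((l - m)! : ℝ) / ((l + m)! : ℝ)) *
          (1 - y ^ 2) ^ ((m : ℝ) / 2) * (1 / (2 ^ l * (l ! : ℝ)))) * q.eval y = 0 := by
        rw [← h]; ring
      rcases mul_eq_zero.mp h' with h0 | h0
      · exact absurd h0 (mul_pos (mul_pos hsq hrp) hcpos).ne'
      · exact h0
    · intro h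
      rw [h]; ring
  set e := T.orderIsoOfFin hTcard with he
  refine ⟨fun j => (e j : ℝ), ?_, ?_, ?_⟩
  · intro i j hij
    exact_mod_cast e.strictMono hij
  · intro j
    have hm : (e j : ℝ) ∈ T := (e j).2
    have hms : (e j : ℝ) ∈ s := (Finset.mem_filter.mp hm).1
    refine ⟨hTsub _ hm, ?_⟩
    exact (hnalf _ (hTsub _ hm)).mpr (by rw [hq]; exact hsz _ hms)
  · intro y hy hz
    have hq0 : q.eval y = 0 := (hnalf y hy).mp hz
    have hys : y ∈ s := hroot y hq0
    have hyT : y ∈ T := by rw [hT, Finset.mem_filter]; exact ⟨hys, hy.1⟩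
    refine ⟨e.symm ⟨y, hyT⟩, ?_⟩
    simp
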